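/- Let D_k, D_ℓ : R → R be derivations, each commuting with ∂ and annihilating h, extended coefficientwise to Ψ(R). Let L = h²∂² + 2u with u ∈ R, fix k, ℓ ≥ 0, set aₙ = 1/(2n+1)!!, and suppose the Lax equations D_k(L) = (a_k/h) [ (L^{k+1/2})₊ , L ] and D_ℓ(L) = (a_ℓ/h) [ (L^{ℓ+1/2})₊ , L ] hold. Then the Zakharov–Shabat zero-curvature equation holds: (h/a_k) · D_k( (L^{ℓ+1/2})₊ ) − (h/a_ℓ) · D_ℓ( (L^{k+1/2})₊ ) = [ (L^{k+1/2})₊ , (L^{ℓ+1/2})₊ ]; moreover the same identity holds with both projections (·)₊ replaced by −(·)₋. -/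

import Mathlib

open scoped BigOperators

/-- Generalized binomial coefficient `C(k,l) = k(k-1)⋯(k-l+1)/l!` for `k : ℤ`. -/
def gbinom (k : ℤ) (l : ℕ) : ℚ :=
  (∏ i ∈ Finset.range l, ((k : ℚ) - i)) / (Nat.factorial l)

/-- Pseudo-differential operators (and symbols): coefficient functions `ℤ → R`
with support bounded above.  The parameter `d` (the derivation) determines the product. -/
structure PDO (R : Type) [CommRing R] [Algebra ℚ R] (d : R →+ R) where
  coeff : ℤ → R
  bdd : ∃ N : ℤ, ∀ n : ℤ, N < n → coeff n = 0

namespace PDO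

variable {R : Type} [CommRing R] [Algebra ℚ R] {d : R →+ R}

theorem ext' {A B : PDO R d} (h : A.coeff = B.coeff) : A = B := by
  cases A; cases B; cases h; rfl

set_option linter.unusedSectionVars false in
theorem iterD_zero (d : R →+ R) (j : ℕ) : d^[j] (0 : R) = 0 := by
  induction j with
  | zero => rfl
  | succ j ih => rw [Function.iterate_succ_apply', ih, map_zero]

instance : Zero (PDO R d) := ⟨⟨fun _ => 0, ⟨0, fun _ _ => rfl⟩⟩⟩

instance : One (PDO R d) :=
  ⟨⟨fun n => if n = 0 then 1 else 0, ⟨0, fun n hn => if_neg (by omega)⟩⟩⟩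

instance : Add (PDO R d) :=
  ⟨fun A B => ⟨fun n => A.coeff n + B.coeff n, by
    obtain ⟨N, hN⟩ := A.bdd
    obtain ⟨M, hM⟩ := B.bdd
    exact ⟨max N M, fun n hn => by
      show A.coeff n + B.coeff n = 0
      rw [hN n (lt_of_le_of_lt (le_max_left N M) hn),
        hM n (lt_of_le_of_lt (le_max_right N M) hn), add_zero]⟩⟩⟩

instance : Neg (PDO R d) :=
  ⟨fun A => ⟨fun n => -A.coeff n, by
    obtain ⟨N, hN⟩ := A.bdd
    exact ⟨N, fun n hn => by show -A.coeff n = 0; rw [hN n hn, neg_zero]⟩⟩⟩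

instance : SMul ℚ (PDO R d) :=
  ⟨fun c A => ⟨fun n => c • A.coeff n, by
    obtain ⟨N, hN⟩ := A.bdd
    exact ⟨N, fun n hn => by show c • A.coeff n = 0; rw [hN n hn, smul_zero]⟩⟩⟩

instance : AddCommGroup (PDO R d) where
  add := (· + ·)
  zero := 0
  neg := Neg.neg
  add_assoc A B C := ext' (funext fun n => add_assoc (A.coeff n) (B.coeff n) (C.coeff n))
  zero_add A := ext' (funext fun n => zero_add (A.coeff n))
  add_zero A := ext' (funext fun n => add_zero (A.coeff n))
  add_comm A B := ext' (funext fun n => add_comm (A.coeff n) (B.coeff n))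
  neg_add_cancel A := ext' (funext fun n => neg_add_cancel (A.coeff n))
  nsmul := nsmulRec
  zsmul := zsmulRec

/-- The product of pseudo-differential operators, determined by the commutation rule
`∂^k · f = Σ_{l ≥ 0} C(k,l) (∂^l f) ∂^(k-l)`. -/
noncomputable instance : Mul (PDO R d) :=
  ⟨fun A B =>
    ⟨fun n => ∑ᶠ (k : ℤ) (m : ℤ),
        if _ : 0 ≤ k + m - n then
          A.coeff k * (gbinom k (k + m - n).toNat • (d^[(k + m - n).toNat] (B.coeff m)))
        else 0, by
      obtain ⟨N, hN⟩ := A.bdd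
      obtain ⟨M, hM⟩ := B.bdd
      refine ⟨N + M, fun n hn => ?_⟩
      have hz : ∀ k m : ℤ,
          (if _ : 0 ≤ k + m - n then
            A.coeff k * (gbinom k (k + m - n).toNat • (d^[(k + m - n).toNat] (B.coeff m)))
          else 0) = 0 := by
        intro k m
        by_cases hl : 0 ≤ k + m - n
        · rw [dif_pos hl]
          by_cases hk : N < k
          · rw [hN k hk, zero_mul]
          · rw [hM m (by omega), iterD_zero, smul_zero, mul_zero]
        · rw [dif_neg hl]
      simp only [hz, finsum_zero]⟩⟩

noncomputable def npow (A : PDO R d) : ℕ → PDO R d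
  | 0 => 1
  | n + 1 => npow A n * A

noncomputable instance : Pow (PDO R d) ℕ := ⟨fun A n => A.npow n⟩

/-- The monomial `r ∂^k`. -/
def mono (r : R) (k : ℤ) : PDO R d :=
  ⟨fun n => if n = k then r else 0, ⟨k, fun n hn => if_neg (by omega)⟩⟩

/-- The constant (order-zero) operator `r`. -/
def const (r : R) : PDO R d := mono r 0

/-- The operator `∂`. -/
def del : PDO R d := mono (1 : R) 1

/-- The operator `h∂`. -/
def hdel (h : Rˣ) : PDO R d := mono (h : R) 1

/-- The Lax operator `L = h²∂² + 2u`. -/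
def Lop (h : Rˣ) (u : R) : PDO R d :=
  ⟨fun n => if n = 2 then (h : R) ^ 2 else if n = 0 then 2 * u else 0,
   ⟨2, fun n hn => by
      show (if n = 2 then (h : R) ^ 2 else if n = 0 then 2 * u else 0) = 0
      rw [if_neg (by omega), if_neg (by omega)]⟩⟩

/-- The differential part `A₊`. -/
def pos (A : PDO R d) : PDO R d :=
  ⟨fun n => if 0 ≤ n then A.coeff n else 0, by
    obtain ⟨N, hN⟩ := A.bdd
    refine ⟨N, fun n hn => ?_⟩
    show (if 0 ≤ n then A.coeff n else 0) = 0
    by_cases h0 : (0 : ℤ) ≤ n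
    · rw [if_pos h0]; exact hN n hn
    · rw [if_neg h0]⟩

/-- The integral part `A₋ = A − A₊`. -/
def negp (A : PDO R d) : PDO R d :=
  ⟨fun n => if n < 0 then A.coeff n else 0, ⟨0, fun n hn => if_neg (by omega)⟩⟩

/-- The residue `Res_∂ A = a₋₁`. -/
def res (A : PDO R d) : R := A.coeff (-1)

/-- The formal adjoint, determined by `(f ∂^k)* = (−∂)^k · f`. -/
noncomputable def adj (A : PDO R d) : PDO R d :=
  ⟨fun n => ∑ᶠ k : ℤ,
      if _ : 0 ≤ k - n then
        (((-1 : ℚ) ^ k) * gbinom k (k - n).toNat) • (d^[(k - n).toNat] (A.coeff k))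
      else 0, by
    obtain ⟨N, hN⟩ := A.bdd
    refine ⟨N, fun n hn => ?_⟩
    have hz : ∀ k : ℤ, (if _ : 0 ≤ k - n then
        (((-1 : ℚ) ^ k) * gbinom k (k - n).toNat) • (d^[(k - n).toNat] (A.coeff k))
      else 0) = 0 := by
      intro k
      by_cases hl : 0 ≤ k - n
      · rw [dif_pos hl, hN k (by omega), iterD_zero, smul_zero]
      · rw [dif_neg hl]
    simp only [hz, finsum_zero]⟩

/-- The operator `P(h∂) = Σ pₙ hⁿ ∂ⁿ` associated to the symbol `P(λ) = Σ pₙ λⁿ`. -/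
noncomputable def ofSymbol (h : Rˣ) (A : PDO R d) : PDO R d :=
  ⟨fun n => A.coeff n * ((h ^ n : Rˣ) : R), by
    obtain ⟨N, hN⟩ := A.bdd
    exact ⟨N, fun n hn => by show A.coeff n * ((h ^ n : Rˣ) : R) = 0; rw [hN n hn, zero_mul]⟩⟩

/-- Apply `d^[i]` to each coefficient. -/
def mapD (i : ℕ) (A : PDO R d) : PDO R d :=
  ⟨fun n => d^[i] (A.coeff n), by
    obtain ⟨N, hN⟩ := A.bdd
    exact ⟨N, fun n hn => by show d^[i] (A.coeff n) = 0; rw [hN n hn, iterD_zero]⟩⟩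

/-- The coefficientwise extension of an additive map `D : R →+ R`. -/
def mapHom (D : R →+ R) (A : PDO R d) : PDO R d :=
  ⟨fun n => D (A.coeff n), by
    obtain ⟨N, hN⟩ := A.bdd
    exact ⟨N, fun n hn => by show D (A.coeff n) = 0; rw [hN n hn, map_zero]⟩⟩

/-- The commutator `[A, B] = AB − BA`. -/
noncomputable def comm (A B : PDO R d) : PDO R d := A * B - B * A

end PDO

/-- The Leibniz rule: `d` is a derivation. -/
def Leibniz {R : Type} [CommRing R] [Algebra ℚ R] (d : R →+ R) : Prop :=
  ∀ a b : R, d (a * b) = a * d b + b * d a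

/-- `aₙ = 1/(2n+1)!!`. -/
def kdvA (n : ℕ) : ℚ := 1 / (Nat.doubleFactorial (2 * n + 1))

/-- `bₙ = (2n−1)!!` (with `b₀ = (−1)!! = 1`). -/
def kdvB (n : ℕ) : ℚ := (Nat.doubleFactorial (2 * n - 1) : ℕ)


def qbinom (x : ℚ) (l : ℕ) : ℚ :=
  (∏ i ∈ Finset.range l, (x - i)) / (Nat.factorial l)

lemma gbinom_eq (k : ℤ) (l : ℕ) : gbinom k l = qbinom (k : ℚ) l := rfl

lemma qbinom_zero (x : ℚ) : qbinom x 0 = 1 := by simp [qbinom]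

lemma factorial_ne (l : ℕ) : ((Nat.factorial l : ℚ)) ≠ 0 := by
  exact_mod_cast Nat.factorial_ne_zero l

lemma qbinom_succ_mul (x : ℚ) (l : ℕ) :
    (l + 1 : ℚ) * qbinom x (l + 1) = qbinom x l * (x - l) := by
  unfold qbinom
  rw [Finset.prod_range_succ, Nat.factorial_succ]
  push_cast
  field_simp

lemma qbinom_mul_sub (x : ℚ) (l : ℕ) :
    qbinom x l * (x - l) = (l + 1 : ℚ) * qbinom x (l + 1) := (qbinom_succ_mul x l).symm

/-- trinomial revision -/
lemma qbinom_trinomial (x : ℚ) (j a : ℕ) :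
    qbinom x j * qbinom (x - j) a = ((j + a).choose j : ℚ) * qbinom x (j + a) := by
  unfold qbinom
  rw [Finset.prod_range_add]
  have hprod : ∀ i ∈ Finset.range a, x - (j : ℚ) - i = x - ((j + i : ℕ) : ℚ) := by
    intro i _; push_cast; ring
  rw [Finset.prod_congr rfl hprod]
  have hfac : ((j + a).choose j : ℚ) * (Nat.factorial j) * (Nat.factorial a)
      = ((j + a).factorial : ℚ) := by
    have h3 := Nat.choose_mul_factorial_mul_factorial (Nat.le_add_right j a)
    have h2 : (j + a) - j = a := by omega
    rw [h2] at h3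
    exact_mod_cast h3
  field_simp
  rw [← hfac]
  ring

/-- Vandermonde for generalized binomial coefficients. -/
lemma qbinom_vandermonde (x y : ℚ) : ∀ N : ℕ,
    qbinom (x + y) N = ∑ t ∈ Finset.range (N + 1), qbinom x t * qbinom y (N - t) := by
  intro N
  induction N with
  | zero => simp [qbinom_zero]
  | succ N ih =>
    have key : (N + 1 : ℚ) * qbinom (x + y) (N + 1) = qbinom (x + y) N * (x + y - N) :=
      qbinom_succ_mul _ _
    have expand : qbinom (x + y) N * (x + y - N)
        = ∑ t ∈ Finset.range (N + 1),
            (qbinom x t * (x - t)) * qbinom y (N - t)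
          + ∑ t ∈ Finset.range (N + 1),
            qbinom x t * (qbinom y (N - t) * (y - (N - t : ℕ))) := by
      rw [ih, Finset.sum_mul, ← Finset.sum_add_distrib]
      apply Finset.sum_congr rfl
      intro t ht
      have : ((N - t : ℕ) : ℚ) = (N : ℚ) - t := by
        have := Finset.mem_range.mp ht; push_cast [Nat.cast_sub (by omega : t ≤ N)]; ring
      rw [this]; ring
    have e1 : ∑ t ∈ Finset.range (N + 1), (qbinom x t * (x - t)) * qbinom y (N - t)
        = ∑ t ∈ Finset.range (N + 1), ((t + 1 : ℚ) * qbinom x (t + 1)) * qbinom y (N - t) := by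
      apply Finset.sum_congr rfl; intro t _; rw [qbinom_mul_sub]
    have e2 : ∑ t ∈ Finset.range (N + 1),
          qbinom x t * (qbinom y (N - t) * (y - (N - t : ℕ)))
        = ∑ t ∈ Finset.range (N + 1),
          qbinom x t * (((N - t : ℕ) + 1 : ℚ) * qbinom y (N - t + 1)) := by
      apply Finset.sum_congr rfl; intro t _; rw [qbinom_mul_sub]
    -- reindex first sum: t+1 =: u
    have e1' : ∑ t ∈ Finset.range (N + 1), ((t + 1 : ℚ) * qbinom x (t + 1)) * qbinom y (N - t)
        = ∑ u ∈ Finset.range (N + 2), ((u : ℚ) * qbinom x u) * qbinom y (N + 1 - u) := by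
      rw [Finset.sum_range_succ' (fun u => ((u : ℚ) * qbinom x u) * qbinom y (N + 1 - u)) (N+1)]
      simp only [Nat.cast_zero, zero_mul, mul_zero, zero_mul, add_zero]
      apply Finset.sum_congr rfl
      intro t _
      have : N + 1 - (t + 1) = N - t := by omega
      rw [this]; push_cast; ring
    have e2' : ∑ t ∈ Finset.range (N + 1),
          qbinom x t * (((N - t : ℕ) + 1 : ℚ) * qbinom y (N - t + 1))
        = ∑ t ∈ Finset.range (N + 2),
          qbinom x t * ((((N + 1 - t : ℕ)) : ℚ) * qbinom y (N + 1 - t)) := by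
      conv_rhs => rw [Finset.sum_range_succ]
      simp only [Nat.sub_self, Nat.cast_zero, zero_mul, mul_zero, add_zero]
      apply Finset.sum_congr rfl
      intro t ht
      have h1 : N + 1 - t = N - t + 1 := by have := Finset.mem_range.mp ht; omega
      rw [h1]; push_cast; ring
    have sum_eq : (N + 1 : ℚ) * qbinom (x + y) (N + 1)
        = ∑ u ∈ Finset.range (N + 2),
            ((u : ℚ) + ((N + 1 - u : ℕ) : ℚ)) * (qbinom x u * qbinom y (N + 1 - u)) := by
      rw [key, expand, e1, e2, e1', e2', ← Finset.sum_add_distrib]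
      apply Finset.sum_congr rfl; intro u _; ring
    have wt : ∀ u ∈ Finset.range (N + 2),
        ((u : ℚ) + ((N + 1 - u : ℕ) : ℚ)) = (N + 1 : ℚ) := by
      intro u hu
      have := Finset.mem_range.mp hu
      push_cast [Nat.cast_sub (by omega : u ≤ N + 1)]; ring
    rw [Finset.sum_congr rfl (fun u hu => by rw [wt u hu])] at sum_eq
    rw [← Finset.mul_sum] at sum_eq
    have hN1 : (N + 1 : ℚ) ≠ 0 := by positivity
    exact mul_left_cancel₀ hN1 sum_eq

/-- vanishing: for a natural number first argument smaller than `l`. -/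
lemma qbinom_nat_eq_zero {m : ℕ} {l : ℕ} (h : m < l) : qbinom (m : ℚ) l = 0 := by
  unfold qbinom
  rw [Finset.prod_eq_zero (Finset.mem_range.mpr h) (by simp)]
  simp

lemma gbinom_eq_zero {k : ℤ} {l : ℕ} (h0 : 0 ≤ k) (h : k < l) : gbinom k l = 0 := by
  rw [gbinom_eq]
  have : (k : ℚ) = ((k.toNat : ℕ) : ℚ) := by exact_mod_cast (congrArg (fun z : ℤ => (z : ℚ)) (Int.toNat_of_nonneg h0)).symm
  rw [this]
  exact qbinom_nat_eq_zero (by omega)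

lemma gbinom_zero (k : ℤ) : gbinom k 0 = 1 := by simp [gbinom]

/-- the key associativity identity -/
lemma qbinom_assoc_key (x y : ℚ) (j N : ℕ) :
    qbinom x j * qbinom (x + y - j) N
      = ∑ u ∈ Finset.range (N + 1), ((j + u).choose j : ℚ) * qbinom x (j + u) * qbinom y (N - u) := by
  have expand : qbinom (x + y - j) N = qbinom ((x - j) + y) N := by ring_nf
  rw [expand, qbinom_vandermonde (x - j) y N, Finset.mul_sum]
  apply Finset.sum_congr rfl
  intro u _
  rw [← mul_assoc, qbinom_trinomial x j u]


set_option linter.unusedSectionVars false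
set_option maxHeartbeats 1000000

-- ============ Layer 2: derivation lemmas ============
set_option linter.unusedSectionVars false
section DLemmas
variable {R : Type} [CommRing R] [Algebra ℚ R] (d : R →+ R)

lemma iterD_add (j : ℕ) (x y : R) : d^[j] (x + y) = d^[j] x + d^[j] y := by
  induction j with
  | zero => rfl
  | succ j ih => rw [Function.iterate_succ_apply', Function.iterate_succ_apply',
      Function.iterate_succ_apply', ih, map_add]

lemma iterD_smul (j : ℕ) (c : ℚ) (x : R) : d^[j] (c • x) = c • d^[j] x := by
  induction j with
  | zero => rfl
  | succ j ih => rw [Function.iterate_succ_apply', Function.iterate_succ_apply', ih,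
      map_rat_smul]

lemma iterD_neg (j : ℕ) (x : R) : d^[j] (-x) = -d^[j] x := by
  induction j with
  | zero => rfl
  | succ j ih => rw [Function.iterate_succ_apply', Function.iterate_succ_apply', ih, map_neg]

lemma iterD_sum {ι : Type} (j : ℕ) (s : Finset ι) (f : ι → R) :
    d^[j] (∑ i ∈ s, f i) = ∑ i ∈ s, d^[j] (f i) := by
  classical
  induction s using Finset.cons_induction with
  | empty => simp [PDO.iterD_zero]
  | cons a s ha ih => rw [Finset.sum_cons, Finset.sum_cons, iterD_add, ih]

lemma iterD_iterD (i j : ℕ) (x : R) : d^[i] (d^[j] x) = d^[i + j] x :=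
  (Function.iterate_add_apply _ i j x).symm

lemma iterD_of_d_eq_zero {x : R} (hx : d x = 0) {j : ℕ} (hj : j ≠ 0) : d^[j] x = 0 := by
  obtain ⟨t, rfl⟩ := Nat.exists_eq_succ_of_ne_zero hj
  rw [Function.iterate_succ_apply, hx, PDO.iterD_zero]

lemma Leibniz.d_one (hd : Leibniz d) : d (1 : R) = 0 := by
  have h1 := hd 1 1
  simp only [one_mul, mul_one] at h1
  -- d 1 = d 1 + d 1
  have : d (1 : R) + d 1 = d 1 + 0 := by rw [add_zero, ← h1]
  exact (add_left_cancel this)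

/-- iterated Leibniz rule -/
lemma iterD_mul (hd : Leibniz d) (t : ℕ) (x y : R) :
    d^[t] (x * y) = ∑ j ∈ Finset.range (t + 1), (t.choose j) • (d^[j] x * d^[t - j] y) := by
  induction t with
  | zero => simp
  | succ t ih =>
    rw [Function.iterate_succ_apply', ih, map_sum]
    have step : ∀ j ∈ Finset.range (t + 1),
        d ((t.choose j) • (d^[j] x * d^[t - j] y))
          = (t.choose j) • (d^[j] x * d^[t - j + 1] y)
            + (t.choose j) • (d^[j + 1] x * d^[t - j] y) := by
      intro j _
      rw [map_nsmul, hd, ← smul_add]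
      congr 1
      rw [Function.iterate_succ_apply' d (t - j) y, Function.iterate_succ_apply' d j x]
      ring
    rw [Finset.sum_congr rfl step, Finset.sum_add_distrib]
    -- second sum: reindex
    have re : ∑ j ∈ Finset.range (t + 1), (t.choose j) • (d^[j + 1] x * d^[t - j] y)
        = ∑ j ∈ Finset.range (t + 2), (if j = 0 then 0 else (t.choose (j - 1))) •
            (d^[j] x * d^[t + 1 - j] y) := by
      rw [Finset.sum_range_succ' (fun j => (if j = 0 then 0 else (t.choose (j - 1))) •
            (d^[j] x * d^[t + 1 - j] y)) (t + 1)]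
      simp only [Nat.add_sub_cancel, zero_smul, add_zero, Nat.succ_ne_zero, if_false,
        if_true, reduceIte]
      apply Finset.sum_congr rfl
      intro j hj
      have h2 : t + 1 - (j + 1) = t - j := by omega
      rw [h2]
    have le : ∑ j ∈ Finset.range (t + 1), (t.choose j) • (d^[j] x * d^[t - j + 1] y)
        = ∑ j ∈ Finset.range (t + 2), (if j = t + 1 then 0 else (t.choose j)) •
            (d^[j] x * d^[t + 1 - j] y) := by
      rw [Finset.sum_range_succ (fun j => (if j = t + 1 then 0 else (t.choose j)) •
            (d^[j] x * d^[t + 1 - j] y)) (t + 1)]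
      rw [if_pos rfl, zero_smul, add_zero]
      apply Finset.sum_congr rfl
      intro j hj
      have hj' := Finset.mem_range.mp hj
      rw [if_neg (by omega)]
      have : t - j + 1 = t + 1 - j := by omega
      rw [this]
    rw [re, le, ← Finset.sum_add_distrib]
    apply Finset.sum_congr rfl
    intro j hj
    have hj' := Finset.mem_range.mp hj
    rw [← add_smul]
    congr 1
    by_cases h0 : j = 0
    · subst h0; simp
    · by_cases h1 : j = t + 1
      · subst h1
        rw [if_pos rfl, if_neg h0, zero_add, Nat.add_sub_cancel, Nat.choose_self,
          Nat.choose_self]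
      · rw [if_neg h1, if_neg h0]
        obtain ⟨i, rfl⟩ := Nat.exists_eq_succ_of_ne_zero h0
        rw [Nat.succ_sub_one, Nat.choose_succ_succ t i]
        exact add_comm _ _

end DLemmas

-- ============ Layer 3: PDO coefficient lemmas ============
namespace PDO
variable {R : Type} [CommRing R] [Algebra ℚ R] {d : R →+ R}

@[simp] lemma zero_coeff (n : ℤ) : (0 : PDO R d).coeff n = 0 := rfl
@[simp] lemma add_coeff (A B : PDO R d) (n : ℤ) : (A + B).coeff n = A.coeff n + B.coeff n := rfl
@[simp] lemma neg_coeff (A : PDO R d) (n : ℤ) : (-A).coeff n = -A.coeff n := rfl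
@[simp] lemma smul_coeff (c : ℚ) (A : PDO R d) (n : ℤ) : (c • A).coeff n = c • A.coeff n := rfl
@[simp] lemma sub_coeff (A B : PDO R d) (n : ℤ) : (A - B).coeff n = A.coeff n - B.coeff n := by
  rw [sub_eq_add_neg, add_coeff, neg_coeff, ← sub_eq_add_neg]
@[simp] lemma one_coeff (n : ℤ) : (1 : PDO R d).coeff n = if n = 0 then 1 else 0 := rfl
@[simp] lemma mono_coeff (r : R) (k n : ℤ) :
    (mono (d := d) r k).coeff n = if n = k then r else 0 := rfl
@[simp] lemma const_coeff (r : R) (n : ℤ) :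
    (const (d := d) r).coeff n = if n = 0 then r else 0 := rfl
@[simp] lemma pos_coeff (A : PDO R d) (n : ℤ) :
    (pos A).coeff n = if 0 ≤ n then A.coeff n else 0 := rfl
@[simp] lemma negp_coeff (A : PDO R d) (n : ℤ) :
    (negp A).coeff n = if n < 0 then A.coeff n else 0 := rfl
@[simp] lemma mapHom_coeff (D : R →+ R) (A : PDO R d) (n : ℤ) :
    (mapHom D A).coeff n = D (A.coeff n) := rfl

lemma sum_coeff {ι : Type} (s : Finset ι) (f : ι → PDO R d) (n : ℤ) :
    (∑ i ∈ s, f i).coeff n = ∑ i ∈ s, (f i).coeff n := by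
  classical
  induction s using Finset.cons_induction with
  | empty => rfl
  | cons a s ha ih => rw [Finset.sum_cons, Finset.sum_cons, add_coeff, ih]

/-- bounded above by `N` -/
def Bdd (A : PDO R d) (N : ℤ) : Prop := ∀ n : ℤ, N < n → A.coeff n = 0

lemma bdd_exists (A : PDO R d) : ∃ N, Bdd A N := A.bdd

/-- the term in the product formula -/
noncomputable def dterm (A B : PDO R d) (n k m : ℤ) : R :=
  if _ : 0 ≤ k + m - n then
    A.coeff k * (gbinom k (k + m - n).toNat • (d^[(k + m - n).toNat] (B.coeff m)))
  else 0

lemma mul_coeff (A B : PDO R d) (n : ℤ) :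
    (A * B).coeff n = ∑ᶠ (k : ℤ) (m : ℤ), dterm A B n k m := rfl

lemma dterm_eq_zero_left {A B : PDO R d} {a : ℤ} (ha : Bdd A a) {n k m : ℤ} (hk : a < k) :
    dterm A B n k m = 0 := by
  unfold dterm
  split
  · rw [ha k hk, zero_mul]
  · rfl

lemma dterm_eq_zero_right {A B : PDO R d} {b : ℤ} (hb : Bdd B b) {n k m : ℤ} (hm : b < m) :
    dterm A B n k m = 0 := by
  unfold dterm
  split
  · rw [hb m hm, iterD_zero, smul_zero, mul_zero]
  · rfl

lemma dterm_eq_zero_low {A B : PDO R d} {n k m : ℤ} (hlt : k + m < n) :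
    dterm A B n k m = 0 := by
  unfold dterm
  rw [dif_neg (by omega)]

end PDO



open scoped BigOperators
set_option linter.unusedSectionVars false

section SumHelpers
variable {M : Type} [AddCommMonoid M]

lemma sum_of_vanish {ι : Type} [DecidableEq ι] {s t : Finset ι} {f : ι → M}
    (hs : ∀ i ∈ s, i ∉ t → f i = 0) (ht : ∀ i ∈ t, i ∉ s → f i = 0) :
    ∑ i ∈ s, f i = ∑ i ∈ t, f i := by
  rw [Finset.sum_subset (Finset.subset_union_left (s₂ := t))
      (fun x hx hxs => ht x (by simpa [hxs] using Finset.mem_union.mp hx) hxs),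
    Finset.sum_subset (Finset.subset_union_right (s₁ := s))
      (fun x hx hxt => hs x (by simpa [hxt] using Finset.mem_union.mp hx) hxt)]

/-- reindex a ℤ-interval sum (reflected) as a ℕ-range sum: `K = c - j`. -/
lemma sum_Icc_eq_sum_range (f : ℤ → M) (c : ℤ) (J : ℕ) :
    ∑ K ∈ Finset.Icc (c - J + 1) c, f K = ∑ j ∈ Finset.range J, f (c - j) := by
  apply Finset.sum_nbij' (i := fun K => (c - K).toNat) (j := fun j => c - (j : ℤ))
  · intro K hK
    simp only [Finset.mem_Icc] at hK
    simp only [Finset.mem_range]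
    omega
  · intro j hj
    simp only [Finset.mem_range] at hj
    simp only [Finset.mem_Icc]
    omega
  · intro K hK
    simp only [Finset.mem_Icc] at hK
    omega
  · intro j hj
    simp only [Finset.mem_range] at hj
    omega
  · intro K hK
    simp only [Finset.mem_Icc] at hK
    congr 1
    omega

end SumHelpers

namespace PDO
variable {R : Type} [CommRing R] [Algebra ℚ R] {d : R →+ R}

/-- The master formula: the product coefficient as a finite double sum, with
flexible lower bounds on the index boxes. -/
lemma mul_coeff_eq {A B : PDO R d} {a b : ℤ} (ha : Bdd A a) (hb : Bdd B b) (n : ℤ)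
    {lo mlo : ℤ} (h1 : lo ≤ n - b) (h2 : mlo ≤ n - a) :
    (A * B).coeff n = ∑ k ∈ Finset.Icc lo a, ∑ m ∈ Finset.Icc mlo b, dterm A B n k m := by
  rw [mul_coeff]
  have inner : ∀ k : ℤ, ∑ᶠ m : ℤ, dterm A B n k m = ∑ m ∈ Finset.Icc mlo b, dterm A B n k m := by
    intro k
    apply finsum_eq_finset_sum_of_support_subset
    intro m hm
    simp only [Function.mem_support] at hm
    simp only [Finset.coe_Icc, Set.mem_Icc]
    constructor
    · by_contra hc
      push_neg at hc
      -- m < mlo ≤ n - a; nonzero needs k ≤ a and k + m ≥ n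
      apply hm
      by_cases hk : a < k
      · exact dterm_eq_zero_left ha hk
      · exact dterm_eq_zero_low (by omega)
    · by_contra hc
      push_neg at hc
      exact hm (dterm_eq_zero_right hb hc)
  rw [finsum_congr inner]
  apply finsum_eq_finset_sum_of_support_subset
  intro k hk
  simp only [Function.mem_support] at hk
  simp only [Finset.coe_Icc, Set.mem_Icc]
  constructor
  · by_contra hc
    push_neg at hc
    apply hk
    apply Finset.sum_eq_zero
    intro m hm
    simp only [Finset.mem_Icc] at hm
    -- k < lo ≤ n - b, m ≤ b so k + m < n
    exact dterm_eq_zero_low (by omega)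
  · by_contra hc
    push_neg at hc
    apply hk
    apply Finset.sum_eq_zero
    intro m _
    exact dterm_eq_zero_left ha hc

lemma coeff_eq_zero_of_forall_dterm (A B : PDO R d) (n : ℤ)
    (h : ∀ k m : ℤ, dterm A B n k m = 0) : (A * B).coeff n = 0 := by
  rw [mul_coeff]
  have : ∀ k : ℤ, ∑ᶠ m : ℤ, dterm A B n k m = 0 := by
    intro k
    rw [finsum_congr (fun m => h k m)]
    exact finsum_zero
  rw [finsum_congr this]
  exact finsum_zero

/-- order bound for products -/
lemma mul_bdd {A B : PDO R d} {a b : ℤ} (ha : Bdd A a) (hb : Bdd B b) :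
    Bdd (A * B) (a + b) := by
  intro n hn
  apply coeff_eq_zero_of_forall_dterm
  intro k m
  by_cases hk : a < k
  · exact dterm_eq_zero_left ha hk
  · by_cases hm : b < m
    · exact dterm_eq_zero_right hb hm
    · exact dterm_eq_zero_low (by omega)

/-- products of nonnegative-order operators have nonnegative order -/
lemma mul_low {A B : PDO R d} (hA : ∀ n : ℤ, n < 0 → A.coeff n = 0)
    (hB : ∀ n : ℤ, n < 0 → B.coeff n = 0) (n : ℤ) (hn : n < 0) : (A * B).coeff n = 0 := by
  apply coeff_eq_zero_of_forall_dterm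
  intro k m
  by_cases hk : k < 0
  · unfold dterm; split
    · rw [hA k hk, zero_mul]
    · rfl
  · by_cases hm : m < 0
    · unfold dterm; split
      · rw [hB m hm, iterD_zero, smul_zero, mul_zero]
      · rfl
    · -- k,m ≥ 0, n < 0: the binomial vanishes
      unfold dterm
      split
      · rename_i hg
        rw [gbinom_eq_zero (by omega) (by omega), zero_smul, mul_zero]
      · rfl

/-- products of strictly negative-order operators have order ≤ -2 -/
lemma mul_neg_ord {A B : PDO R d} (hA : ∀ n : ℤ, 0 ≤ n → A.coeff n = 0)
    (hB : ∀ n : ℤ, 0 ≤ n → B.coeff n = 0) (n : ℤ) (hn : -2 < n) : (A * B).coeff n = 0 := by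
  apply coeff_eq_zero_of_forall_dterm
  intro k m
  by_cases hk : 0 ≤ k
  · unfold dterm; split
    · rw [hA k hk, zero_mul]
    · rfl
  · by_cases hm : 0 ≤ m
    · unfold dterm; split
      · rw [hB m hm, iterD_zero, smul_zero, mul_zero]
      · rfl
    · exact dterm_eq_zero_low (by omega)

-- ===== distributivity, zero, neg, smul =====

lemma mul_zero' (A : PDO R d) : A * (0 : PDO R d) = 0 := by
  apply ext'; funext n
  rw [zero_coeff]
  apply coeff_eq_zero_of_forall_dterm
  intro k m
  unfold dterm; split
  · rw [zero_coeff, iterD_zero, smul_zero, mul_zero]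
  · rfl

lemma zero_mul' (A : PDO R d) : (0 : PDO R d) * A = 0 := by
  apply ext'; funext n
  rw [zero_coeff]
  apply coeff_eq_zero_of_forall_dterm
  intro k m
  unfold dterm; split
  · rw [zero_coeff, zero_mul]
  · rfl

lemma bdd_add {A B : PDO R d} {a : ℤ} (ha : Bdd A a) (hb : Bdd B a) : Bdd (A + B) a :=
  fun n hn => by rw [add_coeff, ha n hn, hb n hn, add_zero]

lemma bdd_mono {A : PDO R d} {a a' : ℤ} (ha : Bdd A a) (h : a ≤ a') : Bdd A a' :=
  fun n hn => ha n (by omega)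

lemma mul_add' (A B C : PDO R d) : A * (B + C) = A * B + A * C := by
  apply ext'; funext n
  obtain ⟨a, ha⟩ := A.bdd
  obtain ⟨b, hb⟩ := B.bdd
  obtain ⟨c, hc⟩ := C.bdd
  have hb' : Bdd B (max b c) := bdd_mono hb (le_max_left _ _)
  have hc' : Bdd C (max b c) := bdd_mono hc (le_max_right _ _)
  have hbc : Bdd (B + C) (max b c) := bdd_add hb' hc'
  rw [add_coeff,
    mul_coeff_eq ha hbc n (lo := n - max b c) (mlo := n - a) le_rfl le_rfl,
    mul_coeff_eq ha hb' n (lo := n - max b c) (mlo := n - a) le_rfl le_rfl,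
    mul_coeff_eq ha hc' n (lo := n - max b c) (mlo := n - a) le_rfl le_rfl,
    ← Finset.sum_add_distrib]
  apply Finset.sum_congr rfl
  intro k _
  rw [← Finset.sum_add_distrib]
  apply Finset.sum_congr rfl
  intro m _
  unfold dterm
  split
  · rw [add_coeff, iterD_add, smul_add, mul_add]
  · rw [add_zero]

lemma add_mul' (A B C : PDO R d) : (A + B) * C = A * C + B * C := by
  apply ext'; funext n
  obtain ⟨a, ha⟩ := A.bdd
  obtain ⟨b, hb⟩ := B.bdd
  obtain ⟨c, hc⟩ := C.bdd
  have ha' : Bdd A (max a b) := bdd_mono ha (le_max_left _ _)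
  have hb' : Bdd B (max a b) := bdd_mono hb (le_max_right _ _)
  have hab : Bdd (A + B) (max a b) := bdd_add ha' hb'
  rw [add_coeff,
    mul_coeff_eq hab hc n (lo := n - c) (mlo := n - max a b) le_rfl le_rfl,
    mul_coeff_eq ha' hc n (lo := n - c) (mlo := n - max a b) le_rfl le_rfl,
    mul_coeff_eq hb' hc n (lo := n - c) (mlo := n - max a b) le_rfl le_rfl,
    ← Finset.sum_add_distrib]
  apply Finset.sum_congr rfl
  intro k _
  rw [← Finset.sum_add_distrib]
  apply Finset.sum_congr rfl
  intro m _
  unfold dterm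
  split
  · rw [add_coeff, add_mul]
  · rw [add_zero]

lemma mul_neg' (A B : PDO R d) : A * (-B) = -(A * B) := by
  have h := mul_add' A B (-B)
  rw [show B + -B = 0 from neg_add_cancel B ▸ (add_comm B (-B) ▸ rfl), mul_zero'] at h
  · exact (neg_eq_of_add_eq_zero_right h.symm).symm

lemma neg_mul' (A B : PDO R d) : (-A) * B = -(A * B) := by
  have h := add_mul' A (-A) B
  rw [show A + -A = 0 by abel, zero_mul'] at h
  exact (neg_eq_of_add_eq_zero_right h.symm).symm

lemma sub_mul' (A B C : PDO R d) : (A - B) * C = A * C - B * C := by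
  rw [sub_eq_add_neg, add_mul', neg_mul', ← sub_eq_add_neg]

lemma mul_sub' (A B C : PDO R d) : A * (B - C) = A * B - A * C := by
  rw [sub_eq_add_neg, mul_add', mul_neg', ← sub_eq_add_neg]

lemma bdd_smul {A : PDO R d} {a : ℤ} (ha : Bdd A a) (c : ℚ) : Bdd (c • A) a :=
  fun n hn => by rw [smul_coeff, ha n hn, smul_zero]

lemma mul_smul' (c : ℚ) (A B : PDO R d) : A * (c • B) = c • (A * B) := by
  apply ext'; funext n
  obtain ⟨a, ha⟩ := A.bdd
  obtain ⟨b, hb⟩ := B.bdd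
  rw [smul_coeff,
    mul_coeff_eq ha (bdd_smul hb c) n (lo := n - b) (mlo := n - a) le_rfl le_rfl,
    mul_coeff_eq ha hb n (lo := n - b) (mlo := n - a) le_rfl le_rfl,
    Finset.smul_sum]
  apply Finset.sum_congr rfl
  intro k _
  rw [Finset.smul_sum]
  apply Finset.sum_congr rfl
  intro m _
  unfold dterm
  split
  · rw [smul_coeff, iterD_smul, smul_comm (gbinom k _) c, mul_smul_comm]
  · rw [smul_zero]

lemma smul_mul' (c : ℚ) (A B : PDO R d) : (c • A) * B = c • (A * B) := by
  apply ext'; funext n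
  obtain ⟨a, ha⟩ := A.bdd
  obtain ⟨b, hb⟩ := B.bdd
  rw [smul_coeff,
    mul_coeff_eq (bdd_smul ha c) hb n (lo := n - b) (mlo := n - a) le_rfl le_rfl,
    mul_coeff_eq ha hb n (lo := n - b) (mlo := n - a) le_rfl le_rfl,
    Finset.smul_sum]
  apply Finset.sum_congr rfl
  intro k _
  rw [Finset.smul_sum]
  apply Finset.sum_congr rfl
  intro m _
  unfold dterm
  split
  · rw [smul_coeff, smul_mul_assoc]
  · rw [smul_zero]

lemma sum_mul' {ι : Type} (s : Finset ι) (f : ι → PDO R d) (B : PDO R d) :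
    (∑ i ∈ s, f i) * B = ∑ i ∈ s, f i * B := by
  classical
  induction s using Finset.cons_induction with
  | empty => simpa using zero_mul' B
  | cons x s hx ih => rw [Finset.sum_cons, Finset.sum_cons, add_mul', ih]

lemma mul_sum' {ι : Type} (s : Finset ι) (A : PDO R d) (f : ι → PDO R d) :
    A * (∑ i ∈ s, f i) = ∑ i ∈ s, A * f i := by
  classical
  induction s using Finset.cons_induction with
  | empty => simpa using mul_zero' A
  | cons x s hx ih => rw [Finset.sum_cons, Finset.sum_cons, mul_add', ih]

end PDO



open scoped BigOperators
set_option linter.unusedSectionVars false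

-- ===== the scalar identity used for associativity =====
lemma gbinom_key (k m T : ℤ) (j J : ℕ) (hJ : T < (J : ℤ)) :
    (∑ t ∈ Finset.range J,
      if 0 ≤ T - t ∧ j ≤ t then gbinom k t * gbinom m (T - t).toNat * (t.choose j : ℚ) else 0)
    = if 0 ≤ T - j then gbinom k j * gbinom (k + m - j) (T - j).toNat else 0 := by
  by_cases hTj : 0 ≤ T - (j : ℤ)
  · rw [if_pos hTj]
    set N : ℕ := (T - j).toNat with hN
    have hTN : T = (j : ℤ) + N := by omega
    -- restrict the sum to [j, j+N]
    have step1 : (∑ t ∈ Finset.range J,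
        if 0 ≤ T - t ∧ j ≤ t then gbinom k t * gbinom m (T - t).toNat * (t.choose j : ℚ) else 0)
        = ∑ t ∈ Finset.Ico j (j + N + 1),
          if 0 ≤ T - t ∧ j ≤ t then gbinom k t * gbinom m (T - t).toNat * (t.choose j : ℚ)
          else 0 := by
      apply sum_of_vanish
      · intro t ht hnt
        simp only [Finset.mem_range] at ht
        simp only [Finset.mem_Ico] at hnt
        rw [if_neg]
        rintro ⟨hg, hjt⟩
        omega
      · intro t ht hnt
        simp only [Finset.mem_Ico] at ht
        simp only [Finset.mem_range] at hnt
        omega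
    rw [step1, Finset.sum_Ico_eq_sum_range]
    have hlen : j + N + 1 - j = N + 1 := by omega
    rw [hlen]
    have step2 : ∀ u ∈ Finset.range (N + 1),
        (if 0 ≤ T - (j + u : ℕ) ∧ j ≤ j + u then
          gbinom k (j + u) * gbinom m (T - (j + u : ℕ)).toNat * ((j + u).choose j : ℚ) else 0)
        = ((j + u).choose j : ℚ) * qbinom (k : ℚ) (j + u) * qbinom (m : ℚ) (N - u) := by
      intro u hu
      have hu' := Finset.mem_range.mp hu
      rw [if_pos ⟨by push_cast; omega, by omega⟩]
      have harg : (T - (j + u : ℕ)).toNat = N - u := by push_cast; omega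
      rw [harg, gbinom_eq, gbinom_eq]
      ring
    rw [Finset.sum_congr rfl step2, ← qbinom_assoc_key (k : ℚ) (m : ℚ) j N]
    have harg2 : ((k : ℚ) + m - j) = ((k + m - j : ℤ) : ℚ) := by push_cast; ring
    rw [gbinom_eq, gbinom_eq, harg2]
  · rw [if_neg hTj]
    apply Finset.sum_eq_zero
    intro t _
    rw [if_neg]
    rintro ⟨hg, hjt⟩
    omega

namespace PDO
variable {R : Type} [CommRing R] [Algebra ℚ R] {d : R →+ R}

lemma bdd_mono_op (e : R) (p : ℤ) : Bdd (mono (d := d) e p) p :=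
  fun n hn => if_neg (by omega)

/-- the coefficient factor contributed by a right monomial -/
noncomputable def eterm (d : R →+ R) (e : R) (p n K : ℤ) : R :=
  if _ : 0 ≤ K + p - n then gbinom K (K + p - n).toNat • d^[(K + p - n).toNat] e else 0

lemma eterm_eq_zero {e : R} {p n K : ℤ} (h : K + p < n) : eterm d e p n K = 0 :=
  dif_neg (by omega)

lemma dterm_mono (X : PDO R d) (e : R) (p n K m : ℤ) :
    dterm X (mono e p) n K m = if m = p then X.coeff K * eterm d e p n K else 0 := by
  unfold dterm eterm
  by_cases hm : m = p
  · subst hm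
    rw [if_pos rfl]
    split
    · simp [mono_coeff]
    · rw [mul_zero]
  · rw [if_neg hm]
    split
    · rw [mono_coeff, if_neg hm, iterD_zero, smul_zero, mul_zero]
    · rfl

lemma mul_mono_coeff (X : PDO R d) (e : R) (p n : ℤ) :
    (X * mono e p).coeff n = ∑ᶠ K : ℤ, X.coeff K * eterm d e p n K := by
  rw [mul_coeff]
  apply finsum_congr
  intro K
  rw [finsum_congr (fun m => dterm_mono X e p n K m)]
  exact finsum_eq_single _ p (fun m hm => if_neg hm) |>.trans (if_pos rfl)

lemma mul_mono_coeff_eq {X : PDO R d} {x : ℤ} (hx : Bdd X x) (e : R) (p n : ℤ)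
    {lo : ℤ} (hlo : lo ≤ n - p) :
    (X * mono e p).coeff n = ∑ K ∈ Finset.Icc lo x, X.coeff K * eterm d e p n K := by
  rw [mul_mono_coeff]
  apply finsum_eq_finset_sum_of_support_subset
  intro K hK
  simp only [Function.mem_support] at hK
  simp only [Finset.coe_Icc, Set.mem_Icc]
  constructor
  · by_contra hc
    push_neg at hc
    exact hK (by rw [eterm_eq_zero (by omega), mul_zero])
  · by_contra hc
    push_neg at hc
    exact hK (by rw [hx K hc, zero_mul])

-- ===== const and one =====

lemma one_eq_mono : (1 : PDO R d) = mono 1 0 := ext' rfl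

lemma const_eq_mono (r : R) : (const (d := d) r) = mono r 0 := rfl

lemma const_mul_coeff (r : R) (A : PDO R d) (n : ℤ) :
    (const r * A).coeff n = r * A.coeff n := by
  rw [mul_coeff]
  have outer : ∀ k : ℤ, k ≠ 0 → ∑ᶠ m : ℤ, dterm (const r) A n k m = 0 := by
    intro k hk
    have : ∀ m : ℤ, dterm (const r) A n k m = 0 := by
      intro m
      unfold dterm
      split
      · rw [const_coeff, if_neg hk, zero_mul]
      · rfl
    rw [finsum_congr this]; exact finsum_zero
  rw [finsum_eq_single _ 0 outer]
  have inner : ∀ m : ℤ, m ≠ n → dterm (const r) A n 0 m = 0 := by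
    intro m hm
    unfold dterm
    split
    · rename_i hg
      rw [gbinom_eq_zero le_rfl (by omega), zero_smul, mul_zero]
    · rfl
  rw [finsum_eq_single _ n inner]
  unfold dterm
  rw [dif_pos (by omega)]
  simp only [const_coeff, if_pos rfl]
  have : (0 + n - n).toNat = 0 := by omega
  rw [this, gbinom_zero, one_smul]
  simp

lemma mul_const_coeff {r : R} (hr : d r = 0) (A : PDO R d) (n : ℤ) :
    (A * const r).coeff n = A.coeff n * r := by
  rw [const_eq_mono, mul_mono_coeff]
  have : ∀ K : ℤ, K ≠ n → A.coeff K * eterm d r 0 n K = 0 := by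
    intro K hK
    unfold eterm
    split
    · rename_i hg
      rw [iterD_of_d_eq_zero d hr (by omega), smul_zero, mul_zero]
    · rw [mul_zero]
  rw [finsum_eq_single _ n this]
  unfold eterm
  rw [dif_pos (by omega)]
  have h0 : (n + 0 - n).toNat = 0 := by omega
  rw [h0, gbinom_zero, one_smul]
  rfl

lemma one_mul' (A : PDO R d) : 1 * A = A := by
  apply ext'; funext n
  rw [one_eq_mono, ← const_eq_mono, const_mul_coeff, one_mul]

lemma mul_one' (hd : Leibniz d) (A : PDO R d) : A * 1 = A := by
  apply ext'; funext n
  rw [one_eq_mono, ← const_eq_mono, mul_const_coeff (Leibniz.d_one d hd), mul_one]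

lemma const_mul (r : R) (A : PDO R d) : const r * A = ⟨fun n => r * A.coeff n, by
    obtain ⟨N, hN⟩ := A.bdd
    exact ⟨N, fun n hn => by show r * A.coeff n = 0; rw [hN n hn, mul_zero]⟩⟩ :=
  ext' (funext fun n => const_mul_coeff r A n)

lemma const_comm {r : R} (hr : d r = 0) (A : PDO R d) : A * const r = const r * A := by
  apply ext'; funext n
  rw [const_mul_coeff, mul_const_coeff hr, mul_comm]

end PDO



open scoped BigOperators
set_option linter.unusedSectionVars false
set_option maxHeartbeats 1000000

section MoreHelpers
variable {M : Type} [AddCommMonoid M]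

lemma ite_sum_zero {ι : Type} {c : Prop} [Decidable c] {s : Finset ι} (F : ι → M) :
    (if c then ∑ i ∈ s, F i else 0) = ∑ i ∈ s, (if c then F i else 0) := by
  split
  · rfl
  · exact Finset.sum_const_zero.symm

lemma dite_sum_zero {ι : Type} {c : Prop} [Decidable c] {s : Finset ι} (F : c → ι → M) :
    (if h : c then ∑ i ∈ s, F h i else 0) = ∑ i ∈ s, (if h : c then F h i else 0) := by
  split
  · rfl
  · exact Finset.sum_const_zero.symm

/-- ascending reindexing: `K = c + j`. -/
lemma sum_Icc_eq_sum_range' (f : ℤ → M) (c : ℤ) (J : ℕ) :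
    ∑ K ∈ Finset.Icc c (c + J - 1), f K = ∑ j ∈ Finset.range J, f (c + j) := by
  apply Finset.sum_nbij' (i := fun K => (K - c).toNat) (j := fun j => c + (j : ℤ))
  · intro K hK; simp only [Finset.mem_Icc] at hK; simp only [Finset.mem_range]; omega
  · intro j hj; simp only [Finset.mem_range] at hj; simp only [Finset.mem_Icc]; omega
  · intro K hK; simp only [Finset.mem_Icc] at hK; omega
  · intro j hj; simp only [Finset.mem_range] at hj; omega
  · intro K hK; simp only [Finset.mem_Icc] at hK; congr 1; omega

end MoreHelpers

namespace PDO
variable {R : Type} [CommRing R] [Algebra ℚ R] {d : R →+ R}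

variable (d) in
/-- canonical term for the triple product -/
noncomputable def Lterm (A B : PDO R d) (e : R) (p n k m : ℤ) (j : ℕ) : R :=
  if 0 ≤ k + m + p - n - (j : ℤ) then
    (A.coeff k * (gbinom k j • d^[j] (B.coeff m))) *
      (gbinom (k + m - (j : ℤ)) ((k + m + p - n - (j : ℤ)).toNat) •
        d^[(k + m + p - n - (j : ℤ)).toNat] e)
  else 0

variable (d) in
noncomputable def Sterm (A B : PDO R d) (e : R) (p n k q m : ℤ) : R :=
  if _ : 0 ≤ k + q - n then
    A.coeff k * (gbinom k ((k + q - n).toNat) •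
      d^[(k + q - n).toNat] (B.coeff m * eterm d e p q m))
  else 0

variable (d) in
noncomputable def Cterm (A B : PDO R d) (e : R) (p n k m : ℤ) (t j : ℕ) : R :=
  if 0 ≤ k + m + p - n - (t : ℤ) ∧ j ≤ t then
    (gbinom k t * gbinom m ((k + m + p - n - (t : ℤ)).toNat) * (t.choose j : ℚ)) •
      (A.coeff k * (d^[j] (B.coeff m) * d^[(k + m + p - n - (j : ℤ)).toNat] e))
  else 0

theorem mul_mono_assoc (hd : Leibniz d) (A B : PDO R d) (e : R) (p : ℤ) :
    (A * B) * mono e p = A * (B * mono e p) := by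
  obtain ⟨a, ha⟩ := A.bdd
  obtain ⟨b, hb⟩ := B.bdd
  apply ext'; funext n
  set J : ℕ := (a + b + p - n + 1).toNat with hJdef
  have hJ : a + b + p - n + 1 ≤ (J : ℤ) := Int.self_le_toNat _
  -- ===================== LHS =====================
  have L0 : ((A * B) * mono e p).coeff n
      = ∑ K ∈ Finset.Icc (n - p) (a + b), (A * B).coeff K * eterm d e p n K :=
    mul_mono_coeff_eq (mul_bdd ha hb) e p n le_rfl
  have L1 : ∀ K ∈ Finset.Icc (n - p) (a + b),
      (A * B).coeff K * eterm d e p n K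
        = ∑ k ∈ Finset.Icc (n - p - b) a, ∑ m ∈ Finset.Icc (n - p - a) b,
            dterm A B K k m * eterm d e p n K := by
    intro K hK
    simp only [Finset.mem_Icc] at hK
    rw [mul_coeff_eq ha hb K (lo := n - p - b) (mlo := n - p - a) (by omega) (by omega),
      Finset.sum_mul]
    exact Finset.sum_congr rfl fun k _ => Finset.sum_mul ..
  have L2 : ((A * B) * mono e p).coeff n
      = ∑ k ∈ Finset.Icc (n - p - b) a, ∑ m ∈ Finset.Icc (n - p - a) b,
          ∑ K ∈ Finset.Icc (n - p) (a + b), dterm A B K k m * eterm d e p n K := by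
    rw [L0, Finset.sum_congr rfl L1, Finset.sum_comm]
    exact Finset.sum_congr rfl fun k _ => Finset.sum_comm
  have L3 : ∀ k ∈ Finset.Icc (n - p - b) a, ∀ m ∈ Finset.Icc (n - p - a) b,
      ∑ K ∈ Finset.Icc (n - p) (a + b), dterm A B K k m * eterm d e p n K
        = ∑ j ∈ Finset.range J, Lterm d A B e p n k m j := by
    intro k hk m hm
    simp only [Finset.mem_Icc] at hk hm
    have hbox : ∑ K ∈ Finset.Icc (n - p) (a + b), dterm A B K k m * eterm d e p n K
        = ∑ K ∈ Finset.Icc (k + m - J + 1) (k + m), dterm A B K k m * eterm d e p n K := by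
      apply sum_of_vanish
      · intro K hK1 hK2
        simp only [Finset.mem_Icc] at hK1 hK2
        by_cases hhi : k + m < K
        · rw [dterm_eq_zero_low hhi, zero_mul]
        · omega
      · intro K hK1 hK2
        simp only [Finset.mem_Icc] at hK1 hK2
        by_cases hlo2 : K < n - p
        · rw [eterm_eq_zero (by omega), mul_zero]
        · omega
    rw [hbox, sum_Icc_eq_sum_range (fun K => dterm A B K k m * eterm d e p n K) (k + m) J]
    apply Finset.sum_congr rfl
    intro j _
    unfold dterm eterm Lterm
    have e1 : k + m - (k + m - (j : ℤ)) = (j : ℤ) := by ring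
    have e2 : k + m - (j : ℤ) + p - n = k + m + p - n - (j : ℤ) := by ring
    rw [e1, e2, dif_pos (Int.natCast_nonneg j), Int.toNat_natCast]
    split
    · rfl
    · rw [mul_zero]
  -- ===================== RHS =====================
  have hY : Bdd (B * mono e p) (b + p) := mul_bdd hb (bdd_mono_op e p)
  have R0 : (A * (B * mono e p)).coeff n
      = ∑ k ∈ Finset.Icc (n - p - b) a, ∑ q ∈ Finset.Icc (n - a) (b + p),
          dterm A (B * mono e p) n k q :=
    mul_coeff_eq ha hY n (lo := n - p - b) (mlo := n - a) (by omega) (by omega)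
  have R1 : ∀ k ∈ Finset.Icc (n - p - b) a, ∀ q ∈ Finset.Icc (n - a) (b + p),
      dterm A (B * mono e p) n k q
        = ∑ m ∈ Finset.Icc (n - p - a) b, Sterm d A B e p n k q m := by
    intro k hk q hq
    simp only [Finset.mem_Icc] at hk hq
    unfold dterm Sterm
    split
    · rw [mul_mono_coeff_eq hb e p q (lo := n - p - a) (by omega), iterD_sum,
        Finset.smul_sum, Finset.mul_sum]
    · exact (Finset.sum_const_zero).symm
  have R2 : (A * (B * mono e p)).coeff n
      = ∑ k ∈ Finset.Icc (n - p - b) a, ∑ m ∈ Finset.Icc (n - p - a) b,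
          ∑ q ∈ Finset.Icc (n - a) (b + p), Sterm d A B e p n k q m := by
    rw [R0, Finset.sum_congr rfl (fun k hk => Finset.sum_congr rfl (R1 k hk))]
    exact Finset.sum_congr rfl fun k _ => Finset.sum_comm
  have R3 : ∀ k ∈ Finset.Icc (n - p - b) a, ∀ m ∈ Finset.Icc (n - p - a) b,
      ∑ q ∈ Finset.Icc (n - a) (b + p), Sterm d A B e p n k q m
        = ∑ t ∈ Finset.range J,
            A.coeff k * (gbinom k t • d^[t] (B.coeff m * eterm d e p (n - k + (t : ℤ)) m)) := by
    intro k hk m hm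
    simp only [Finset.mem_Icc] at hk hm
    have hbox : ∑ q ∈ Finset.Icc (n - a) (b + p), Sterm d A B e p n k q m
        = ∑ q ∈ Finset.Icc (n - k) (n - k + J - 1), Sterm d A B e p n k q m := by
      apply sum_of_vanish
      · intro q hq1 hq2
        simp only [Finset.mem_Icc] at hq1 hq2
        by_cases hlow : q < n - k
        · exact dif_neg (by omega)
        · omega
      · intro q hq1 hq2
        simp only [Finset.mem_Icc] at hq1 hq2
        by_cases hlow : q < n - a
        · exact dif_neg (by omega)
        · -- q > b + p : eterm vanishes
          unfold Sterm
          split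
          · rw [eterm_eq_zero (by omega), mul_zero, iterD_zero, smul_zero, mul_zero]
          · rfl
    rw [hbox, sum_Icc_eq_sum_range' (fun q => Sterm d A B e p n k q m) (n - k) J]
    apply Finset.sum_congr rfl
    intro t _
    unfold Sterm
    have e1 : k + (n - k + (t : ℤ)) - n = (t : ℤ) := by ring
    rw [e1, dif_pos (Int.natCast_nonneg t), Int.toNat_natCast]
  have R4 : ∀ k ∈ Finset.Icc (n - p - b) a, ∀ m ∈ Finset.Icc (n - p - a) b,
      ∀ t ∈ Finset.range J,
      A.coeff k * (gbinom k t • d^[t] (B.coeff m * eterm d e p (n - k + (t : ℤ)) m))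
        = ∑ j ∈ Finset.range J, Cterm d A B e p n k m t j := by
    intro k hk m hm t ht
    simp only [Finset.mem_Icc] at hk hm
    simp only [Finset.mem_range] at ht
    unfold eterm
    have e1 : m + p - (n - k + (t : ℤ)) = k + m + p - n - (t : ℤ) := by ring
    rw [e1]
    by_cases hg : 0 ≤ k + m + p - n - (t : ℤ)
    · rw [dif_pos hg, iterD_mul d hd t (B.coeff m) _, Finset.smul_sum, Finset.mul_sum]
      have step : ∀ j ∈ Finset.range (t + 1),
          A.coeff k * (gbinom k t • ((t.choose j) •
              (d^[j] (B.coeff m) * d^[t - j] (gbinom m ((k + m + p - n - (t : ℤ)).toNat) •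
                d^[(k + m + p - n - (t : ℤ)).toNat] e))))
            = Cterm d A B e p n k m t j := by
        intro j hj
        have hj' := Finset.mem_range.mp hj
        unfold Cterm
        rw [if_pos ⟨hg, by omega⟩]
        rw [iterD_smul, iterD_iterD]
        have eexp : t - j + (k + m + p - n - (t : ℤ)).toNat = (k + m + p - n - (j : ℤ)).toNat := by
          omega
        rw [eexp]
        rw [← Nat.cast_smul_eq_nsmul ℚ (t.choose j)]
        simp only [smul_smul, mul_smul_comm, smul_mul_assoc]
        ring_nf
      rw [Finset.sum_congr rfl step]
      apply Finset.sum_subset (Finset.range_subset_range.mpr (by omega))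
      intro j _ hj
      simp only [Finset.mem_range] at hj
      unfold Cterm
      rw [if_neg (by rintro ⟨_, h2⟩; omega)]
    · rw [dif_neg hg, mul_zero, iterD_zero, smul_zero, mul_zero]
      symm
      apply Finset.sum_eq_zero
      intro j _
      unfold Cterm
      rw [if_neg (by rintro ⟨h1, _⟩; omega)]
  have R6 : ∀ k ∈ Finset.Icc (n - p - b) a, ∀ m ∈ Finset.Icc (n - p - a) b,
      ∀ j ∈ Finset.range J,
      ∑ t ∈ Finset.range J, Cterm d A B e p n k m t j = Lterm d A B e p n k m j := by
    intro k hk m hm j hj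
    simp only [Finset.mem_Icc] at hk hm
    have hrw : ∀ t ∈ Finset.range J, Cterm d A B e p n k m t j
        = (if 0 ≤ k + m + p - n - (t : ℤ) ∧ j ≤ t then
            gbinom k t * gbinom m ((k + m + p - n - (t : ℤ)).toNat) * (t.choose j : ℚ) else 0) •
          (A.coeff k * (d^[j] (B.coeff m) * d^[(k + m + p - n - (j : ℤ)).toNat] e)) := by
      intro t _
      unfold Cterm
      split
      · rfl
      · exact (zero_smul ℚ _).symm
    rw [Finset.sum_congr rfl hrw, ← Finset.sum_smul,
      gbinom_key k m (k + m + p - n) j J (by omega)]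
    unfold Lterm
    split
    · simp only [mul_smul_comm, smul_mul_assoc, smul_smul, mul_assoc]
      congr 1
      ring
    · exact zero_smul ℚ _
  -- ===================== combine =====================
  rw [L2, R2, Finset.sum_congr rfl (fun k hk => Finset.sum_congr rfl (L3 k hk))]
  apply Finset.sum_congr rfl
  intro k hk
  apply Finset.sum_congr rfl
  intro m hm
  rw [R3 k hk m hm, Finset.sum_congr rfl (R4 k hk m hm), Finset.sum_comm,
    Finset.sum_congr rfl (R6 k hk m hm)]

end PDO



open scoped BigOperators
set_option linter.unusedSectionVars false
set_option maxHeartbeats 1000000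

namespace PDO
variable {R : Type} [CommRing R] [Algebra ℚ R] {d : R →+ R}

/-- truncation: keep only coefficients with index `≥ K` -/
def truncLow (K : ℤ) (C : PDO R d) : PDO R d :=
  ⟨fun q => if K ≤ q then C.coeff q else 0, by
    obtain ⟨N, hN⟩ := C.bdd
    refine ⟨N, fun n hn => ?_⟩
    show (if K ≤ n then C.coeff n else 0) = 0
    split
    · exact hN n hn
    · rfl⟩

@[simp] lemma truncLow_coeff (K : ℤ) (C : PDO R d) (q : ℤ) :
    (truncLow K C).coeff q = if K ≤ q then C.coeff q else 0 := rfl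

lemma bdd_tail (K : ℤ) (C : PDO R d) : Bdd (C - truncLow K C) (K - 1) := by
  intro n hn
  rw [sub_coeff, truncLow_coeff, if_pos (by omega), sub_self]

lemma truncLow_eq_sum {C : PDO R d} {c : ℤ} (hc : Bdd C c) (K : ℤ) :
    truncLow K C = ∑ q ∈ Finset.Icc K c, mono (C.coeff q) q := by
  apply ext'; funext n
  rw [sum_coeff, truncLow_coeff]
  have : ∀ q ∈ Finset.Icc K c, (mono (d := d) (C.coeff q) q).coeff n
      = if q = n then C.coeff n else 0 := by
    intro q _
    rw [mono_coeff]
    by_cases hq : q = n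
    · subst hq; simp
    · rw [if_neg (fun hh => hq hh.symm), if_neg hq]
  rw [Finset.sum_congr rfl this, Finset.sum_ite_eq' (Finset.Icc K c) n (fun _ => C.coeff n)]
  by_cases hn : K ≤ n
  · by_cases hnc : n ≤ c
    · rw [if_pos (Finset.mem_Icc.mpr ⟨hn, hnc⟩), if_pos hn]
    · rw [if_neg (fun hh => hnc (Finset.mem_Icc.mp hh).2), if_pos hn, hc n (by omega)]
  · rw [if_neg (fun hh => hn (Finset.mem_Icc.mp hh).1), if_neg hn]

/-- full associativity -/
theorem mul_assoc' (hd : Leibniz d) (A B C : PDO R d) : A * B * C = A * (B * C) := by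
  apply ext'; funext n
  obtain ⟨a, ha⟩ := A.bdd
  obtain ⟨b, hb⟩ := B.bdd
  obtain ⟨c, hc⟩ := C.bdd
  set K : ℤ := n - a - b - 1 with hK
  have hsplit : C = truncLow K C + (C - truncLow K C) := by abel
  have htr : A * B * truncLow K C = A * (B * truncLow K C) := by
    rw [truncLow_eq_sum hc K, mul_sum', mul_sum',
      Finset.sum_congr rfl (fun q _ => mul_mono_assoc hd A B (C.coeff q) q), ← mul_sum',
      ← mul_sum']
  calc (A * B * C).coeff n
      = (A * B * truncLow K C).coeff n + (A * B * (C - truncLow K C)).coeff n := by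
        conv_lhs => rw [hsplit]
        rw [mul_add', add_coeff]
    _ = (A * (B * truncLow K C)).coeff n + (A * (B * (C - truncLow K C))).coeff n := by
        rw [htr, mul_bdd (mul_bdd ha hb) (bdd_tail K C) n (by omega),
          mul_bdd ha (mul_bdd hb (bdd_tail K C)) n (by omega)]
    _ = (A * (B * C)).coeff n := by
        rw [← add_coeff, ← mul_add', ← mul_add', ← hsplit]

-- ===== powers =====

lemma pow_succ_eq (A : PDO R d) (n : ℕ) : A ^ (n + 1) = A ^ n * A := rfl

lemma pow_one_eq (A : PDO R d) : A ^ 1 = A := by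
  show npow A 1 = A
  show npow A 0 * A = A
  exact one_mul' A

lemma comm_pow_right (hd : Leibniz d) {X Y : PDO R d} (hXY : X * Y = Y * X) (n : ℕ) :
    X * Y ^ n = Y ^ n * X := by
  induction n with
  | zero => rw [show Y ^ 0 = (1 : PDO R d) from rfl, mul_one' hd, one_mul']
  | succ n ih =>
    rw [pow_succ_eq, ← mul_assoc' hd, ih, mul_assoc' hd, hXY, ← mul_assoc' hd]

lemma pow_mul_pow_comm (hd : Leibniz d) (A : PDO R d) (i j : ℕ) :
    A ^ i * A ^ j = A ^ j * A ^ i := by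
  apply comm_pow_right hd
  exact (comm_pow_right hd rfl i).symm

-- ===== mapHom =====

lemma mapHom_bdd (D : R →+ R) {A : PDO R d} {a : ℤ} (ha : Bdd A a) : Bdd (mapHom D A) a :=
  fun n hn => by rw [mapHom_coeff, ha n hn, map_zero]

lemma D_iterD {D : R →+ R} (hDd : ∀ r : R, D (d r) = d (D r)) (j : ℕ) (x : R) :
    D (d^[j] x) = d^[j] (D x) := by
  induction j with
  | zero => rfl
  | succ j ih => rw [Function.iterate_succ_apply', Function.iterate_succ_apply', hDd,
      ih]

lemma mapHom_mul {D : R →+ R} (hD : Leibniz D) (hDd : ∀ r : R, D (d r) = d (D r))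
    (A B : PDO R d) :
    mapHom D (A * B) = mapHom D A * B + A * mapHom D B := by
  apply ext'; funext n
  obtain ⟨a, ha⟩ := A.bdd
  obtain ⟨b, hb⟩ := B.bdd
  rw [add_coeff, mapHom_coeff,
    mul_coeff_eq ha hb n (lo := n - b) (mlo := n - a) le_rfl le_rfl,
    mul_coeff_eq (mapHom_bdd D ha) hb n (lo := n - b) (mlo := n - a) le_rfl le_rfl,
    mul_coeff_eq ha (mapHom_bdd D hb) n (lo := n - b) (mlo := n - a) le_rfl le_rfl,
    map_sum, ← Finset.sum_add_distrib]
  apply Finset.sum_congr rfl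
  intro k _
  rw [map_sum, ← Finset.sum_add_distrib]
  apply Finset.sum_congr rfl
  intro m _
  unfold dterm
  split
  · rw [hD, map_rat_smul, D_iterD hDd, mapHom_coeff, mapHom_coeff, mul_comm (gbinom _ _ • _)]
    exact add_comm _ _
  · rw [map_zero, add_zero]

lemma mapHom_add (D : R →+ R) (A B : PDO R d) :
    mapHom D (A + B) = mapHom D A + mapHom D B :=
  ext' (funext fun n => map_add D _ _)

lemma mapHom_neg (D : R →+ R) (A : PDO R d) : mapHom D (-A) = -(mapHom D A) :=
  ext' (funext fun n => map_neg D _)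

lemma mapHom_sub (D : R →+ R) (A B : PDO R d) :
    mapHom D (A - B) = mapHom D A - mapHom D B :=
  ext' (funext fun n => by rw [mapHom_coeff, sub_coeff, map_sub, sub_coeff, mapHom_coeff,
    mapHom_coeff])

lemma mapHom_smul (D : R →+ R) (c : ℚ) (A : PDO R d) :
    mapHom D (c • A) = c • mapHom D A :=
  ext' (funext fun n => by rw [mapHom_coeff, smul_coeff, map_rat_smul, smul_coeff, mapHom_coeff])

lemma mapHom_pos (D : R →+ R) (A : PDO R d) : mapHom D (pos A) = pos (mapHom D A) := by
  apply ext'; funext n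
  rw [mapHom_coeff, pos_coeff, pos_coeff, mapHom_coeff]
  split
  · rfl
  · exact map_zero D

lemma mapHom_negp (D : R →+ R) (A : PDO R d) : mapHom D (negp A) = negp (mapHom D A) := by
  apply ext'; funext n
  rw [mapHom_coeff, negp_coeff, negp_coeff, mapHom_coeff]
  split
  · rfl
  · exact map_zero D

-- ===== commutator =====

lemma comm_mul_right (hd : Leibniz d) (Q X Y : PDO R d) :
    comm Q (X * Y) = comm Q X * Y + X * comm Q Y := by
  unfold comm
  rw [sub_mul', mul_sub', ← mul_assoc' hd X Q Y, ← mul_assoc' hd X Y Q, ← mul_assoc' hd Q X Y]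
  abel

lemma comm_add_right (A B C : PDO R d) : comm A (B + C) = comm A B + comm A C := by
  unfold comm
  rw [mul_add', add_mul']
  abel

lemma comm_add_left (A B C : PDO R d) : comm (A + B) C = comm A C + comm B C := by
  unfold comm
  rw [mul_add', add_mul']
  abel

lemma comm_neg_neg (A B : PDO R d) : comm (-A) (-B) = comm A B := by
  unfold comm
  rw [mul_neg', neg_mul', mul_neg', neg_mul', neg_neg, neg_neg]

lemma comm_antisymm (A B : PDO R d) : comm A B = -comm B A := by
  unfold comm
  abel

-- ===== const =====

lemma const_mid (hd : Leibniz d) {r : R} (hr : d r = 0) (X W : PDO R d) :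
    X * (const r * W) = const r * (X * W) := by
  rw [← mul_assoc' hd, const_comm hr, mul_assoc' hd]

lemma pos_const_mul (r : R) (X : PDO R d) : pos (const r * X) = const r * pos X := by
  apply ext'; funext n
  rw [pos_coeff, const_mul_coeff, const_mul_coeff, pos_coeff]
  split
  · rfl
  · rw [mul_zero]

lemma negp_const_mul (r : R) (X : PDO R d) : negp (const r * X) = const r * negp X := by
  apply ext'; funext n
  rw [negp_coeff, const_mul_coeff, const_mul_coeff, negp_coeff]
  split
  · rfl
  · rw [mul_zero]

lemma const_mul_const_mul (r s : R) (X : PDO R d) :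
    const r * (const s * X) = const (r * s) * X := by
  apply ext'; funext n
  rw [const_mul_coeff, const_mul_coeff, const_mul_coeff, mul_assoc]

-- ===== pos / negp algebra =====

lemma pos_add (A B : PDO R d) : pos (A + B) = pos A + pos B := by
  apply ext'; funext n
  rw [add_coeff, pos_coeff, pos_coeff, pos_coeff, add_coeff]
  split
  · rfl
  · rw [add_zero]

lemma negp_add (A B : PDO R d) : negp (A + B) = negp A + negp B := by
  apply ext'; funext n
  rw [add_coeff, negp_coeff, negp_coeff, negp_coeff, add_coeff]
  split
  · rfl
  · rw [add_zero]

lemma pos_neg (A : PDO R d) : pos (-A) = -pos A := by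
  apply ext'; funext n
  rw [neg_coeff, pos_coeff, pos_coeff, neg_coeff]
  split
  · rfl
  · rw [neg_zero]

lemma negp_neg (A : PDO R d) : negp (-A) = -negp A := by
  apply ext'; funext n
  rw [neg_coeff, negp_coeff, negp_coeff, neg_coeff]
  split
  · rfl
  · rw [neg_zero]

lemma pos_sub (A B : PDO R d) : pos (A - B) = pos A - pos B := by
  rw [sub_eq_add_neg, pos_add, pos_neg, ← sub_eq_add_neg]

lemma negp_sub (A B : PDO R d) : negp (A - B) = negp A - negp B := by
  rw [sub_eq_add_neg, negp_add, negp_neg, ← sub_eq_add_neg]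

lemma pos_smul (c : ℚ) (A : PDO R d) : pos (c • A) = c • pos A := by
  apply ext'; funext n
  rw [smul_coeff, pos_coeff, pos_coeff, smul_coeff]
  split
  · rfl
  · rw [smul_zero]

lemma negp_smul (c : ℚ) (A : PDO R d) : negp (c • A) = c • negp A := by
  apply ext'; funext n
  rw [smul_coeff, negp_coeff, negp_coeff, smul_coeff]
  split
  · rfl
  · rw [smul_zero]

lemma pos_add_negp (A : PDO R d) : pos A + negp A = A := by
  apply ext'; funext n
  rw [add_coeff, pos_coeff, negp_coeff]
  by_cases hn : 0 ≤ n
  · rw [if_pos hn, if_neg (by omega), add_zero]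
  · rw [if_neg hn, if_pos (by omega), zero_add]

lemma pos_eq_self {A : PDO R d} (hA : ∀ n : ℤ, n < 0 → A.coeff n = 0) : pos A = A := by
  apply ext'; funext n
  rw [pos_coeff]
  split
  · rfl
  · rw [hA n (by omega)]

lemma pos_eq_zero {A : PDO R d} (hA : ∀ n : ℤ, 0 ≤ n → A.coeff n = 0) : pos A = 0 := by
  apply ext'; funext n
  rw [pos_coeff, zero_coeff]
  split
  · exact hA n (by omega)
  · rfl

lemma negp_eq_self {A : PDO R d} (hA : ∀ n : ℤ, 0 ≤ n → A.coeff n = 0) : negp A = A := by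
  apply ext'; funext n
  rw [negp_coeff]
  split
  · rfl
  · rw [hA n (by omega)]

lemma negp_eq_zero {A : PDO R d} (hA : ∀ n : ℤ, n < 0 → A.coeff n = 0) : negp A = 0 := by
  apply ext'; funext n
  rw [negp_coeff, zero_coeff]
  split
  · exact hA n (by omega)
  · rfl

-- ===== the cancellation lemma =====

lemma cancel_lemma (h : Rˣ) {M : PDO R d} (hM1 : M.coeff 1 = (h : R))
    (hM2 : ∀ j : ℤ, 1 < j → M.coeff j = 0) (Y : PDO R d)
    (hY : Y * M + M * Y = 0) : Y = 0 := by
  obtain ⟨N, hN⟩ := Y.bdd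
  have hM2' : Bdd M 1 := hM2
  have key : ∀ t : ℕ, ∀ r : ℤ, N + 1 - t ≤ r → Y.coeff r = 0 := by
    intro t
    induction t with
    | zero => intro r hr; exact hN r (by omega)
    | succ t IH =>
      intro r hr
      by_cases hr' : N + 1 - t ≤ r
      · exact IH r hr'
      have hYb : Bdd Y r := fun n hn => IH n (by omega)
      have hYM : (Y * M).coeff (r + 1) = Y.coeff r * (h : R) := by
        rw [mul_coeff_eq hYb hM2' (r + 1) (lo := r) (mlo := 1) (by omega) (by omega),
          Finset.Icc_self, Finset.Icc_self, Finset.sum_singleton, Finset.sum_singleton]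
        unfold dterm
        rw [dif_pos (by omega)]
        have h0 : (r + 1 - (r + 1)).toNat = 0 := by omega
        have h0' : r + 1 - (r + 1) = 0 := by omega
        rw [show (r + 1 - (r+1)) = (0:ℤ) from h0', show ((0:ℤ)).toNat = 0 from rfl,
          gbinom_zero, one_smul, hM1]
        rfl
      have hMY : (M * Y).coeff (r + 1) = (h : R) * Y.coeff r := by
        rw [mul_coeff_eq hM2' hYb (r + 1) (lo := 1) (mlo := r) (by omega) (by omega),
          Finset.Icc_self, Finset.Icc_self, Finset.sum_singleton, Finset.sum_singleton]
        unfold dterm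
        rw [dif_pos (by omega)]
        have h0' : 1 + r - (r + 1) = (0:ℤ) := by omega
        rw [h0', show ((0:ℤ)).toNat = 0 from rfl, gbinom_zero, one_smul, hM1]
        rfl
      have hzero : Y.coeff r * (h : R) + (h : R) * Y.coeff r = 0 := by
        rw [← hYM, ← hMY, ← add_coeff, hY, zero_coeff]
      have h2 : (2 : ℚ) • ((h : R) * Y.coeff r) = 0 := by
        rw [two_smul, ← hzero, mul_comm]
      have h3 : (h : R) * Y.coeff r = 0 := by
        have := congrArg (fun x => ((2 : ℚ)⁻¹) • x) h2
        simpa [smul_smul] using this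
      have : Y.coeff r = ((h⁻¹ : Rˣ) : R) * ((h : R) * Y.coeff r) := by
        rw [← mul_assoc, Units.inv_mul, one_mul]
      rw [this, h3, mul_zero]
  apply ext'; funext n
  rw [zero_coeff]
  exact key (N + 1 - n).toNat n (by omega)

end PDO



open scoped BigOperators
set_option linter.unusedSectionVars false
set_option maxHeartbeats 1000000

section Aux
variable {R : Type} [CommRing R] [Algebra ℚ R]

lemma Leibniz.inv_unit (D : R →+ R) (hD : Leibniz D) (h : Rˣ) (hh : D (h : R) = 0) :
    D ((h⁻¹ : Rˣ) : R) = 0 := by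
  have h1 : D (1 : R) = 0 := Leibniz.d_one D hD
  have h2 : D ((h : R) * ((h⁻¹ : Rˣ) : R)) = 0 := by rw [Units.mul_inv]; exact h1
  rw [hD] at h2
  rw [hh, mul_zero, add_zero] at h2
  have : ((h⁻¹ : Rˣ) : R) * ((h : R) * D ((h⁻¹ : Rˣ) : R)) = 0 := by rw [h2, mul_zero]
  rwa [← mul_assoc, Units.inv_mul, one_mul] at this

lemma kdvA_ne (n : ℕ) : kdvA n ≠ 0 := by
  unfold kdvA
  apply one_div_ne_zero
  exact_mod_cast (Nat.doubleFactorial_pos _).ne' 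

end Aux

namespace PDO
variable {R : Type} [CommRing R] [Algebra ℚ R] {d : R →+ R}

noncomputable instance : Module ℚ (PDO R d) where
  one_smul A := ext' (funext fun n => one_smul ℚ (A.coeff n))
  mul_smul c c' A := ext' (funext fun n => mul_smul c c' (A.coeff n))
  smul_zero c := ext' (funext fun n => smul_zero c)
  smul_add c A B := ext' (funext fun n => smul_add c (A.coeff n) (B.coeff n))
  add_smul c c' A := ext' (funext fun n => add_smul c c' (A.coeff n))
  zero_smul A := ext' (funext fun n => zero_smul ℚ (A.coeff n))

lemma const_one : (const (1 : R) : PDO R d) = 1 := ext' rfl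

lemma zs_core (hd : Leibniz d) {A B : PDO R d} (hAB : comm A B = 0) :
    comm (pos A) B - comm (pos B) A = comm (pos A) (pos B) - comm (negp A) (negp B) := by
  have e1 : comm (pos A) B = comm (pos A) (pos B) + comm (pos A) (negp B) := by
    rw [← comm_add_right, pos_add_negp]
  have e2 : comm (pos B) A = comm (pos B) (pos A) + comm (pos B) (negp A) := by
    rw [← comm_add_right, pos_add_negp]
  have F0 : comm (pos A) (pos B) + comm (pos A) (negp B)
      + (comm (negp A) (pos B) + comm (negp A) (negp B)) = 0 := by
    rw [← comm_add_right, ← comm_add_right, ← comm_add_left, pos_add_negp, pos_add_negp]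
    exact hAB
  rw [e1, e2, comm_antisymm (pos B) (pos A), comm_antisymm (pos B) (negp A),
    ← sub_eq_zero, ← F0]
  abel

/-- Lax equation propagates to all powers of `M`. -/
lemma lax_pow (hd : Leibniz d) (h : Rˣ) (hdh : d (h : R) = 0) (u : R)
    {M : PDO R d} (hM1 : M.coeff 1 = (h : R)) (hM2 : ∀ j : ℤ, 1 < j → M.coeff j = 0)
    (hM3 : M * M = Lop h u)
    (D : R →+ R) (hD : Leibniz D) (hDd : ∀ r : R, D (d r) = d (D r)) (c : ℚ)
    (Q : PDO R d)
    (hLax : mapHom D (Lop h u) = c • (const ((h⁻¹ : Rˣ) : R) * comm Q (Lop h u))) :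
    ∀ nn : ℕ, mapHom D (M ^ (nn + 1))
      = c • (const ((h⁻¹ : Rˣ) : R) * comm Q (M ^ (nn + 1))) := by
  have hdinv : d ((h⁻¹ : Rˣ) : R) = 0 := Leibniz.inv_unit d hd h hdh
  set X := mapHom D M with hXdef
  set Z := c • (const ((h⁻¹ : Rˣ) : R) * comm Q M) with hZdef
  have hXL : X * M + M * X = c • (const ((h⁻¹ : Rˣ) : R) * comm Q (M * M)) := by
    rw [← mapHom_mul hD hDd, hM3, hLax]
  have hZsum : Z * M + M * Z = c • (const ((h⁻¹ : Rˣ) : R) * comm Q (M * M)) := by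
    rw [hZdef, smul_mul', mul_smul', ← smul_add, mul_assoc' hd, const_mid hd hdinv,
      ← mul_add', comm_mul_right hd]
  have hY : (X - Z) * M + M * (X - Z) = 0 := by
    have e : (X - Z) * M + M * (X - Z) = (X * M + M * X) - (Z * M + M * Z) := by
      rw [sub_mul', mul_sub']; abel
    rw [e, hXL, hZsum, sub_self]
  have hXZ : X = Z := sub_eq_zero.mp (cancel_lemma h hM1 hM2 _ hY)
  intro nn
  induction nn with
  | zero =>
    simp only [Nat.zero_add]
    rw [pow_one_eq]
    exact hXZ
  | succ nn ih =>
    rw [pow_succ_eq, mapHom_mul hD hDd, ih, ← hXdef, hXZ, hZdef, smul_mul', mul_smul', ← smul_add,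
      mul_assoc' hd, const_mid hd hdinv, ← mul_add', ← comm_mul_right hd, ← pow_succ_eq]

/-- the scalar/const reduction -/
lemma reduce_smul (hd : Leibniz d) (h : Rˣ) {c : ℚ} (hc : c ≠ 0) (W : PDO R d) :
    c⁻¹ • (const (h : R) * (c • (const ((h⁻¹ : Rˣ) : R) * W))) = W := by
  rw [mul_smul', smul_smul, inv_mul_cancel₀ hc, one_smul, const_mul_const_mul,
    Units.mul_inv, const_one, one_mul']

end PDO


/-- Zakharov–Shabat zero-curvature equations follow from the Lax equations:
`(h/a_k)D_k((L^(ℓ+1/2))₊) − (h/a_ℓ)D_ℓ((L^(k+1/2))₊) = [(L^(k+1/2))₊, (L^(ℓ+1/2))₊]`,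
and the same identity with `(·)₊` replaced by `−(·)₋`. -/
theorem zakharov_shabat
    (R : Type) [CommRing R] [Algebra ℚ R] (d : R →+ R)
    (hd : Leibniz d) (h : Rˣ) (hdh : d (h : R) = 0)
    (Dk Dl : R →+ R) (hDk : Leibniz Dk) (hDl : Leibniz Dl)
    (hDkd : ∀ r : R, Dk (d r) = d (Dk r)) (hDld : ∀ r : R, Dl (d r) = d (Dl r))
    (hDkh : Dk (h : R) = 0) (hDlh : Dl (h : R) = 0)
    (u : R) (k l : ℕ)
    (M : PDO R d) (hM1 : M.coeff 1 = (h : R)) (hM2 : ∀ j : ℤ, 1 < j → M.coeff j = 0)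
    (hM3 : M * M = PDO.Lop h u)
    (hLaxk : PDO.mapHom Dk (PDO.Lop h u)
      = kdvA k • (PDO.const ((h⁻¹ : Rˣ) : R)
          * PDO.comm (PDO.pos (M ^ (2 * k + 1))) (PDO.Lop h u)))
    (hLaxl : PDO.mapHom Dl (PDO.Lop h u)
      = kdvA l • (PDO.const ((h⁻¹ : Rˣ) : R)
          * PDO.comm (PDO.pos (M ^ (2 * l + 1))) (PDO.Lop h u))) :
    ((kdvA k)⁻¹ • (PDO.const (h : R) * PDO.mapHom Dk (PDO.pos (M ^ (2 * l + 1))))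
        - (kdvA l)⁻¹ • (PDO.const (h : R) * PDO.mapHom Dl (PDO.pos (M ^ (2 * k + 1))))
      = PDO.comm (PDO.pos (M ^ (2 * k + 1))) (PDO.pos (M ^ (2 * l + 1)))) ∧
    ((kdvA k)⁻¹ • (PDO.const (h : R) * PDO.mapHom Dk (-PDO.negp (M ^ (2 * l + 1))))
        - (kdvA l)⁻¹ • (PDO.const (h : R) * PDO.mapHom Dl (-PDO.negp (M ^ (2 * k + 1))))
      = PDO.comm (-PDO.negp (M ^ (2 * k + 1))) (-PDO.negp (M ^ (2 * l + 1)))) := by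
  have derivk : PDO.mapHom Dk (M ^ (2 * l + 1))
      = kdvA k • (PDO.const ((h⁻¹ : Rˣ) : R)
          * PDO.comm (PDO.pos (M ^ (2 * k + 1))) (M ^ (2 * l + 1))) :=
    PDO.lax_pow hd h hdh u hM1 hM2 hM3 Dk hDk hDkd (kdvA k) _ hLaxk (2 * l)
  have derivl : PDO.mapHom Dl (M ^ (2 * k + 1))
      = kdvA l • (PDO.const ((h⁻¹ : Rˣ) : R)
          * PDO.comm (PDO.pos (M ^ (2 * l + 1))) (M ^ (2 * k + 1))) :=
    PDO.lax_pow hd h hdh u hM1 hM2 hM3 Dl hDl hDld (kdvA l) _ hLaxl (2 * k)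
  have hcomm0 : PDO.comm (M ^ (2 * k + 1)) (M ^ (2 * l + 1)) = 0 :=
    sub_eq_zero.mpr (PDO.pow_mul_pow_comm hd M _ _)
  have hposPk : ∀ n : ℤ, n < 0 → (PDO.pos (M ^ (2 * k + 1))).coeff n = 0 :=
    fun n hn => by rw [PDO.pos_coeff, if_neg (by omega)]
  have hposPl : ∀ n : ℤ, n < 0 → (PDO.pos (M ^ (2 * l + 1))).coeff n = 0 :=
    fun n hn => by rw [PDO.pos_coeff, if_neg (by omega)]
  have hnegPk : ∀ n : ℤ, 0 ≤ n → (PDO.negp (M ^ (2 * k + 1))).coeff n = 0 :=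
    fun n hn => by rw [PDO.negp_coeff, if_neg (by omega)]
  have hnegPl : ∀ n : ℤ, 0 ≤ n → (PDO.negp (M ^ (2 * l + 1))).coeff n = 0 :=
    fun n hn => by rw [PDO.negp_coeff, if_neg (by omega)]
  have hQQ : ∀ n : ℤ, n < 0 →
      (PDO.comm (PDO.pos (M ^ (2 * k + 1))) (PDO.pos (M ^ (2 * l + 1)))).coeff n = 0 := by
    intro n hn
    show (PDO.pos (M ^ (2 * k + 1)) * PDO.pos (M ^ (2 * l + 1))
      - PDO.pos (M ^ (2 * l + 1)) * PDO.pos (M ^ (2 * k + 1))).coeff n = 0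
    rw [PDO.sub_coeff, PDO.mul_low hposPk hposPl n hn, PDO.mul_low hposPl hposPk n hn,
      sub_self]
  have hKK : ∀ n : ℤ, 0 ≤ n →
      (PDO.comm (PDO.negp (M ^ (2 * k + 1))) (PDO.negp (M ^ (2 * l + 1)))).coeff n = 0 := by
    intro n hn
    show (PDO.negp (M ^ (2 * k + 1)) * PDO.negp (M ^ (2 * l + 1))
      - PDO.negp (M ^ (2 * l + 1)) * PDO.negp (M ^ (2 * k + 1))).coeff n = 0
    rw [PDO.sub_coeff, PDO.mul_neg_ord hnegPk hnegPl n (by omega),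
      PDO.mul_neg_ord hnegPl hnegPk n (by omega), sub_self]
  have hsplit := PDO.zs_core hd hcomm0
  have h2 : (kdvA k)⁻¹ • (PDO.const (h : R) * PDO.mapHom Dk (PDO.pos (M ^ (2 * l + 1))))
      = PDO.pos (PDO.comm (PDO.pos (M ^ (2 * k + 1))) (M ^ (2 * l + 1))) := by
    rw [PDO.mapHom_pos, derivk, PDO.pos_smul, PDO.pos_const_mul,
      PDO.reduce_smul hd h (kdvA_ne k)]
  have h3 : (kdvA l)⁻¹ • (PDO.const (h : R) * PDO.mapHom Dl (PDO.pos (M ^ (2 * k + 1))))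
      = PDO.pos (PDO.comm (PDO.pos (M ^ (2 * l + 1))) (M ^ (2 * k + 1))) := by
    rw [PDO.mapHom_pos, derivl, PDO.pos_smul, PDO.pos_const_mul,
      PDO.reduce_smul hd h (kdvA_ne l)]
  have g2 : (kdvA k)⁻¹ • (PDO.const (h : R) * PDO.mapHom Dk (-PDO.negp (M ^ (2 * l + 1))))
      = -PDO.negp (PDO.comm (PDO.pos (M ^ (2 * k + 1))) (M ^ (2 * l + 1))) := by
    rw [PDO.mapHom_neg, PDO.mapHom_negp, derivk, PDO.negp_smul, PDO.negp_const_mul,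
      ← smul_neg, ← PDO.mul_neg', PDO.reduce_smul hd h (kdvA_ne k)]
  have g3 : (kdvA l)⁻¹ • (PDO.const (h : R) * PDO.mapHom Dl (-PDO.negp (M ^ (2 * k + 1))))
      = -PDO.negp (PDO.comm (PDO.pos (M ^ (2 * l + 1))) (M ^ (2 * k + 1))) := by
    rw [PDO.mapHom_neg, PDO.mapHom_negp, derivl, PDO.negp_smul, PDO.negp_const_mul,
      ← smul_neg, ← PDO.mul_neg', PDO.reduce_smul hd h (kdvA_ne l)]
  constructor
  · rw [h2, h3, ← PDO.pos_sub, hsplit, PDO.pos_sub, PDO.pos_eq_self hQQ,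
      PDO.pos_eq_zero hKK, sub_zero]
  · rw [g2, g3, PDO.comm_neg_neg]
    have e : -PDO.negp (PDO.comm (PDO.pos (M ^ (2 * k + 1))) (M ^ (2 * l + 1)))
        - -PDO.negp (PDO.comm (PDO.pos (M ^ (2 * l + 1))) (M ^ (2 * k + 1)))
        = -(PDO.negp (PDO.comm (PDO.pos (M ^ (2 * k + 1))) (M ^ (2 * l + 1))
            - PDO.comm (PDO.pos (M ^ (2 * l + 1))) (M ^ (2 * k + 1)))) := by
      rw [PDO.negp_sub]; abel
    rw [e, hsplit, PDO.negp_sub, PDO.negp_eq_zero hQQ, PDO.negp_eq_self hKK, zero_sub,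
      neg_neg]
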